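/- Let 0 < δ̃ < δ, let u be four times continuously differentiable with |u⁗| ≤ M, and let L_η denote the nonlocal operator with constant kernel 3/η³ and horizon η. Then |L_δ u(x) - L_{δ̃} u(x)| ≤ (M/20)·[(δ³ - δ̃³)·δ̃²/δ³ + (δ⁵ - δ̃⁵)/δ³]. -/

import Mathlib

open Set intervalIntegral

lemma myIterDW_eq {u : ℝ → ℝ} (hu : ContDiff ℝ 4 u) {m : ℕ} (hm : m ≤ 4)
    {s : Set ℝ} (hs : UniqueDiffOn ℝ s) {y : ℝ} (hy : y ∈ s) :
    iteratedDerivWithin m u s y = iteratedDeriv m u y := by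
  have h : HasFTaylorSeriesUpTo 4 u (ftaylorSeries ℝ u) :=
    (contDiff_iff_ftaylorSeries).mp hu
  have h1 := (h.hasFTaylorSeriesUpToOn s).eq_iteratedFDerivWithin_of_uniqueDiffOn
    (m := m) (by norm_cast) hs hy
  have h2 := h.eq_iteratedFDeriv (m := m) (by exact_mod_cast Nat.cast_le.mpr hm) y
  rw [iteratedDerivWithin_eq_iteratedFDerivWithin, iteratedDeriv_eq_iteratedFDeriv,
    ← h1, h2]

lemma mySymmTaylor (u : ℝ → ℝ) (hu : ContDiff ℝ 4 u) (M x : ℝ)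
    (hM : ∀ y, |iteratedDeriv 4 u y| ≤ M) (z : ℝ) (hz : 0 ≤ z) :
    |u (x + z) - 2 * u x + u (x - z) - iteratedDeriv 2 u x * z ^ 2| ≤ M * z ^ 4 / 12 := by
  rcases hz.eq_or_lt with rfl | hz
  · simp only [add_zero, sub_zero, ne_eq, OfNat.ofNat_ne_zero, not_false_eq_true, zero_pow,
      mul_zero, sub_zero, zero_div]
    have h0 : u x - 2 * u x + u x = 0 := by ring
    simp [h0]
  set f : ℝ → ℝ := fun t => u (x + t) + u (x - t) with hf
  have h1 : ContDiff ℝ 4 (fun t : ℝ => u (x + t)) := hu.comp (contDiff_const.add contDiff_id)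
  have h2 : ContDiff ℝ 4 (fun t : ℝ => u (x - t)) := hu.comp (contDiff_const.sub contDiff_id)
  have hf4 : ContDiff ℝ 4 f := h1.add h2
  have hfk : ∀ (k : ℕ), k ≤ 4 → ∀ (t : ℝ),
      iteratedDeriv k f t = iteratedDeriv k u (x + t) + (-1 : ℝ) ^ k * iteratedDeriv k u (x - t) := by
    intro k hk t
    have e1 : iteratedDeriv k (fun t : ℝ => u (x + t)) t = iteratedDeriv k u (x + t) := by
      rw [iteratedDeriv_comp_const_add]
    have e2 : iteratedDeriv k (fun t : ℝ => u (x - t)) t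
        = (-1 : ℝ) ^ k * iteratedDeriv k u (x - t) := by
      have h3 := iteratedDeriv_comp_neg k (fun s : ℝ => u (x + s)) t
      simp only [← sub_eq_add_neg] at h3
      rw [h3, iteratedDeriv_comp_const_add]
      simp [smul_eq_mul, sub_eq_add_neg]
    have hadd : iteratedDeriv k f t
        = iteratedDeriv k (fun t : ℝ => u (x + t)) t + iteratedDeriv k (fun t : ℝ => u (x - t)) t := by
      rw [← iteratedDerivWithin_univ, ← iteratedDerivWithin_univ, ← iteratedDerivWithin_univ]
      exact iteratedDerivWithin_add (Set.mem_univ t) uniqueDiffOn_univ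
        ((h1.of_le (by exact_mod_cast hk)).contDiffWithinAt) ((h2.of_le (by exact_mod_cast hk)).contDiffWithinAt)
    rw [hadd, e1, e2]
  have hs : UniqueDiffOn ℝ (Set.Icc (0:ℝ) z) := uniqueDiffOn_Icc hz
  have hDW : ∀ (k : ℕ), k ≤ 4 → ∀ y ∈ Set.Icc (0:ℝ) z,
      iteratedDerivWithin k f (Set.Icc 0 z) y = iteratedDeriv k f y :=
    fun k hk y hy => myIterDW_eq hf4 hk hs hy
  have hd : Differentiable ℝ (iteratedDeriv 3 f) :=
    hf4.differentiable_iteratedDeriv 3 (by norm_num)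
  have hf' : DifferentiableOn ℝ (iteratedDerivWithin 3 f (Set.Icc 0 z)) (Set.Ioo 0 z) :=
    (hd.differentiableOn).congr
      (fun y hy => hDW 3 (by norm_num) y (Set.Ioo_subset_Icc_self hy))
  obtain ⟨x', hx', hxeq⟩ := taylor_mean_remainder_lagrange (n := 3) hz.ne
    (by rw [Set.uIcc_of_le hz.le]; exact (hf4.of_le (by norm_num)).contDiffOn)
    (by rw [Set.uIcc_of_le hz.le, Set.uIoo_of_le hz.le]; exact hf')
  rw [Set.uIcc_of_le hz.le] at hxeq; rw [Set.uIoo_of_le hz.le] at hx'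
  have h0mem : (0:ℝ) ∈ Set.Icc (0:ℝ) z := Set.left_mem_Icc.mpr hz.le
  have hT : taylorWithinEval f 3 (Set.Icc 0 z) 0 z = 2 * u x + iteratedDeriv 2 u x * z ^ 2 := by
    rw [taylor_within_apply]
    have e0 := hDW 0 (by norm_num) 0 h0mem
    have e1' := hDW 1 (by norm_num) 0 h0mem
    have e2' := hDW 2 (by norm_num) 0 h0mem
    have e3' := hDW 3 (by norm_num) 0 h0mem
    rw [Finset.sum_range_succ, Finset.sum_range_succ, Finset.sum_range_succ,
      Finset.sum_range_succ, Finset.sum_range_zero, e0, e1', e2', e3',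
      hfk 0 (by norm_num) 0, hfk 1 (by norm_num) 0, hfk 2 (by norm_num) 0,
      hfk 3 (by norm_num) 0]
    simp only [add_zero, sub_zero, smul_eq_mul]
    norm_num [Nat.factorial]
    ring
  have hfz : f z = u (x + z) + u (x - z) := rfl
  rw [hT, hfz] at hxeq
  have hIb : |iteratedDerivWithin 4 f (Set.Icc 0 z) x'| ≤ 2 * M := by
    rw [hDW 4 le_rfl x' (Set.Ioo_subset_Icc_self hx'), hfk 4 le_rfl x']
    have h4 : ((-1:ℝ))^4 = 1 := by norm_num
    rw [h4, one_mul]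
    calc |iteratedDeriv 4 u (x + x') + iteratedDeriv 4 u (x - x')|
        ≤ |iteratedDeriv 4 u (x + x')| + |iteratedDeriv 4 u (x - x')| := abs_add_le _ _
      _ ≤ M + M := add_le_add (hM _) (hM _)
      _ = 2 * M := by ring
  have key : u (x + z) - 2 * u x + u (x - z) - iteratedDeriv 2 u x * z ^ 2
      = iteratedDerivWithin 4 f (Set.Icc 0 z) x' * z ^ 4 / 24 := by
    have hre : u (x + z) - 2 * u x + u (x - z) - iteratedDeriv 2 u x * z ^ 2
        = u (x + z) + u (x - z) - (2 * u x + iteratedDeriv 2 u x * z ^ 2) := by ring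
    rw [hre, hxeq]
    norm_num [Nat.factorial]
  rw [key]
  set I := iteratedDerivWithin 4 f (Set.Icc 0 z) x'
  have hz4 : (0:ℝ) ≤ z ^ 4 := by positivity
  calc |I * z ^ 4 / 24| = |I| * z ^ 4 / 24 := by
        rw [abs_div, abs_mul, abs_pow, abs_of_nonneg hz.le]; norm_num
    _ ≤ 2 * M * z ^ 4 / 24 := by gcongr
    _ = M * z ^ 4 / 12 := by ring

theorem nonlocal_operator_horizon_perturbation (δ δt M x : ℝ)
    (hδt : 0 < δt) (hδ : δt < δ) (u : ℝ → ℝ)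
    (hu : ContDiff ℝ 4 u)
    (hM : ∀ y, |iteratedDeriv 4 u y| ≤ M) :
    |(∫ z in (0:ℝ)..δ, (3 / δ^3) * (u (x + z) - 2 * u x + u (x - z)))
      - (∫ z in (0:ℝ)..δt, (3 / δt^3) * (u (x + z) - 2 * u x + u (x - z)))|
      ≤ M / 20 * ((δ^3 - δt^3) * δt^2 / δ^3 + (δ^5 - δt^5) / δ^3) := by
  have hδ0 : 0 < δ := hδt.trans hδ
  have hM0 : 0 ≤ M := le_trans (abs_nonneg _) (hM x)
  set c := iteratedDeriv 2 u x with hc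
  have hucont : Continuous u := hu.continuous
  have hgcont : Continuous (fun z : ℝ => u (x + z) - 2 * u x + u (x - z)) := by
    exact ((hucont.comp (continuous_const.add continuous_id)).sub continuous_const).add
      (hucont.comp (continuous_const.sub continuous_id))
  have hRcont : Continuous (fun z : ℝ => u (x + z) - 2 * u x + u (x - z) - c * z ^ 2) :=
    hgcont.sub (continuous_const.mul (continuous_pow 2))
  have hint : ∀ a b : ℝ,
      IntervalIntegrable (fun z : ℝ => u (x + z) - 2 * u x + u (x - z) - c * z ^ 2)
        MeasureTheory.volume a b := fun a b => hRcont.intervalIntegrable a b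
  have hint2 : ∀ a b : ℝ, IntervalIntegrable (fun z : ℝ => M * z ^ 4 / 12)
      MeasureTheory.volume a b := fun a b =>
    ((continuous_const.mul (continuous_pow 4)).div_const 12).intervalIntegrable a b
  set E1 := ∫ z in (0:ℝ)..δt, (u (x + z) - 2 * u x + u (x - z) - c * z ^ 2) with hE1
  set E2 := ∫ z in δt..δ, (u (x + z) - 2 * u x + u (x - z) - c * z ^ 2) with hE2
  have split : ∀ η : ℝ, (∫ z in (0:ℝ)..η, (u (x + z) - 2 * u x + u (x - z)))
      = c * η ^ 3 / 3 + ∫ z in (0:ℝ)..η, (u (x + z) - 2 * u x + u (x - z) - c * z ^ 2) := by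
    intro η
    have e : (fun z : ℝ => u (x + z) - 2 * u x + u (x - z))
        = fun z : ℝ => c * z ^ 2 + (u (x + z) - 2 * u x + u (x - z) - c * z ^ 2) := by
      funext z; ring
    rw [e, intervalIntegral.integral_add
      (show IntervalIntegrable (fun z : ℝ => c * z ^ 2) MeasureTheory.volume 0 η from
        (continuous_const.mul (continuous_pow 2)).intervalIntegrable _ _) (hint _ _),
      intervalIntegral.integral_const_mul, integral_pow]
    norm_num
    ring
  have hadj : E1 + E2 = ∫ z in (0:ℝ)..δ, (u (x + z) - 2 * u x + u (x - z) - c * z ^ 2) :=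
    intervalIntegral.integral_add_adjacent_intervals (hint 0 δt) (hint δt δ)
  have L1 : (∫ z in (0:ℝ)..δ, (3 / δ^3) * (u (x + z) - 2 * u x + u (x - z)))
      = 3 / δ ^ 3 * (c * δ ^ 3 / 3 + (E1 + E2)) := by
    rw [intervalIntegral.integral_const_mul, split δ, hadj]
  have L2 : (∫ z in (0:ℝ)..δt, (3 / δt^3) * (u (x + z) - 2 * u x + u (x - z)))
      = 3 / δt ^ 3 * (c * δt ^ 3 / 3 + E1) := by
    rw [intervalIntegral.integral_const_mul, split δt]
  -- pointwise remainder bound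
  have hR : ∀ z : ℝ, 0 ≤ z →
      |u (x + z) - 2 * u x + u (x - z) - c * z ^ 2| ≤ M * z ^ 4 / 12 :=
    fun z hz => mySymmTaylor u hu M x hM z hz
  have habs : ∀ a b : ℝ, 0 ≤ a → a ≤ b →
      |∫ z in a..b, (u (x + z) - 2 * u x + u (x - z) - c * z ^ 2)|
        ≤ M * (b ^ 5 - a ^ 5) / 60 := by
    intro a b ha hab
    calc |∫ z in a..b, (u (x + z) - 2 * u x + u (x - z) - c * z ^ 2)|
        ≤ ∫ z in a..b, |u (x + z) - 2 * u x + u (x - z) - c * z ^ 2| :=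
          intervalIntegral.abs_integral_le_integral_abs hab
      _ ≤ ∫ z in a..b, M * z ^ 4 / 12 := by
          apply intervalIntegral.integral_mono_on hab ((hint a b).abs) (hint2 a b)
          intro z hz
          exact hR z (le_trans ha hz.1)
      _ = M * (b ^ 5 - a ^ 5) / 60 := by
          have : (fun z : ℝ => M * z ^ 4 / 12) = fun z : ℝ => (M / 12) * z ^ 4 := by
            funext z; ring
          rw [this, intervalIntegral.integral_const_mul, integral_pow]
          ring
  have hB1 : |E1| ≤ M * δt ^ 5 / 60 := by
    have := habs 0 δt le_rfl hδt.le
    simpa using this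
  have hB2 : |E2| ≤ M * (δ ^ 5 - δt ^ 5) / 60 := habs δt δ hδt.le hδ.le
  have hδt3 : (0:ℝ) < δt ^ 3 := by positivity
  have hδ3 : (0:ℝ) < δ ^ 3 := by positivity
  have h33 : 3 / δ ^ 3 ≤ 3 / δt ^ 3 := by
    gcongr
  rw [L1, L2]
  have key2 : 3 / δ ^ 3 * (c * δ ^ 3 / 3 + (E1 + E2)) - 3 / δt ^ 3 * (c * δt ^ 3 / 3 + E1)
      = (3 / δ ^ 3 - 3 / δt ^ 3) * E1 + (3 / δ ^ 3) * E2 := by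
    field_simp
    ring
  rw [key2]
  calc |(3 / δ ^ 3 - 3 / δt ^ 3) * E1 + (3 / δ ^ 3) * E2|
      ≤ |(3 / δ ^ 3 - 3 / δt ^ 3) * E1| + |(3 / δ ^ 3) * E2| := abs_add_le _ _
    _ = (3 / δt ^ 3 - 3 / δ ^ 3) * |E1| + (3 / δ ^ 3) * |E2| := by
        rw [abs_mul, abs_mul, abs_of_nonpos (show 3 / δ ^ 3 - 3 / δt ^ 3 ≤ 0 by linarith),
          abs_of_nonneg (show (0:ℝ) ≤ 3 / δ ^ 3 by positivity)]
        ring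
    _ ≤ (3 / δt ^ 3 - 3 / δ ^ 3) * (M * δt ^ 5 / 60) + (3 / δ ^ 3) * (M * (δ ^ 5 - δt ^ 5) / 60) := by
        exact add_le_add (mul_le_mul_of_nonneg_left hB1 (by linarith))
          (mul_le_mul_of_nonneg_left hB2 (by positivity))
    _ = M / 20 * ((δ^3 - δt^3) * δt^2 / δ^3 + (δ^5 - δt^5) / δ^3) := by
        field_simp
        ring
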